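/- Let (g, J, φ) be a non-abelian nilpotent pseudo-Hermitian quadratic Lie algebra with dim g = n > 4. Then (g, J, φ) is equivalent to a pHQ-double extension of an (n−4)-dimensional nilpotent pseudo-Hermitian quadratic Lie algebra. -/

import Mathlib

open TensorProduct

/-- A pseudo-Hermitian quadratic Lie algebra structure on a real vector space `V`:
`br` is a Lie bracket, `J` is an integrable complex structure, and `φ` is a
nondegenerate symmetric invariant bilinear form compatible with `J`. -/
structure IsPHQ (V : Type*) [AddCommGroup V] [Module ℝ V]
    (br : V → V → V) (J : V → V) (φ : V → V → ℝ) : Prop where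
  br_add_left : ∀ x y z : V, br (x + y) z = br x z + br y z
  br_smul_left : ∀ (c : ℝ) (x z : V), br (c • x) z = c • br x z
  br_skew : ∀ x y : V, br x y = - br y x
  jacobi : ∀ x y z : V, br x (br y z) + br y (br z x) + br z (br x y) = 0
  J_add : ∀ x y : V, J (x + y) = J x + J y
  J_smul : ∀ (c : ℝ) (x : V), J (c • x) = c • J x
  J_sq : ∀ x : V, J (J x) = - x
  integrable : ∀ x y : V, br x y + J (br (J x) y) + J (br x (J y)) - br (J x) (J y) = 0
  phi_add_left : ∀ x y z : V, φ (x + y) z = φ x z + φ y z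
  phi_smul_left : ∀ (c : ℝ) (x y : V), φ (c • x) y = c * φ x y
  phi_symm : ∀ x y : V, φ x y = φ y x
  phi_nondeg : ∀ x : V, (∀ y : V, φ x y = 0) → x = 0
  phi_invariant : ∀ x y z : V, φ (br x y) z + φ y (br x z) = 0
  phi_hermitian : ∀ x y : V, φ (J x) (J y) = φ x y

/-- Equivalence of pseudo-Hermitian quadratic Lie algebras: a linear isomorphism
intertwining the brackets and the complex structures and preserving the metrics. -/
def PHQEquiv {V W : Type*} [AddCommGroup V] [Module ℝ V] [AddCommGroup W] [Module ℝ W]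
    (brV : V → V → V) (JV : V → V) (φV : V → V → ℝ)
    (brW : W → W → W) (JW : W → W) (φW : W → W → ℝ) : Prop :=
  ∃ ψ : V ≃ₗ[ℝ] W, (∀ x y, ψ (brV x y) = brW (ψ x) (ψ y)) ∧
    (∀ x, ψ (JV x) = JW (ψ x)) ∧ ∀ x y, φW (ψ x) (ψ y) = φV x y

/-- Lower central series of a subalgebra `W` with respect to a bracket `br`. -/
def lcsW {V : Type*} [AddCommGroup V] [Module ℝ V] (br : V → V → V)
    (W : Submodule ℝ V) : ℕ → Submodule ℝ V
  | 0 => W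
  | n + 1 => Submodule.span ℝ {w : V | ∃ x ∈ lcsW br W n, ∃ y ∈ W, w = br x y}

/-- `φ` has signature `(a, b)`: there is an orthogonal decomposition into a
negative definite subspace of dimension `a` and a positive definite subspace of
dimension `b` (the convention of the paper, where positive definite is `(0, 2n)`). -/
def hasSignature {V : Type*} [AddCommGroup V] [Module ℝ V]
    (φ : V → V → ℝ) (a b : ℕ) : Prop :=
  ∃ N P : Submodule ℝ V, N ⊓ P = ⊥ ∧ N ⊔ P = ⊤ ∧
    (∀ x ∈ N, ∀ y ∈ P, φ x y = 0) ∧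
    (∀ x ∈ N, x ≠ 0 → φ x x < 0) ∧ (∀ x ∈ P, x ≠ 0 → 0 < φ x x) ∧
    Module.finrank ℝ N = a ∧ Module.finrank ℝ P = b

/-- The bracket of the pHQ-double extension `g = ℝz ⊕ ℝz' ⊕ g₀ ⊕ ℝv' ⊕ ℝv`,
with an element `(a, b, x, c, d)` standing for `a·z + b·z' + x + c·v' + d·v`. -/
def extBr {V : Type*} [AddCommGroup V] [Module ℝ V]
    (br₀ : V → V → V) (φ₀ : V → V → ℝ) (D F : V → V) (s₀ : V) :
    (ℝ × ℝ × V × ℝ × ℝ) → (ℝ × ℝ × V × ℝ × ℝ) → (ℝ × ℝ × V × ℝ × ℝ) :=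
  fun P Q =>
    (φ₀ (F P.2.2.1) Q.2.2.1 + P.2.2.2.1 * φ₀ s₀ Q.2.2.1 - Q.2.2.2.1 * φ₀ s₀ P.2.2.1,
     φ₀ (D P.2.2.1) Q.2.2.1 - P.2.2.2.2 * φ₀ s₀ Q.2.2.1 + Q.2.2.2.2 * φ₀ s₀ P.2.2.1,
     br₀ P.2.2.1 Q.2.2.1 + P.2.2.2.2 • F Q.2.2.1 - Q.2.2.2.2 • F P.2.2.1
       + P.2.2.2.1 • D Q.2.2.1 - Q.2.2.2.1 • D P.2.2.1
       + (P.2.2.2.2 * Q.2.2.2.1 - P.2.2.2.1 * Q.2.2.2.2) • s₀,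
     0, 0)

/-- The complex structure of the pHQ-double extension:
`Jz = z'`, `Jz' = -z`, `Jv = v'`, `Jv' = -v`, `Jx = J₀x`. -/
def extJ {V : Type*} [AddCommGroup V] [Module ℝ V] (J₀ : V → V) :
    (ℝ × ℝ × V × ℝ × ℝ) → (ℝ × ℝ × V × ℝ × ℝ) :=
  fun P => (-P.2.1, P.1, J₀ P.2.2.1, P.2.2.2.2, -P.2.2.2.1)

/-- The metric of the pHQ-double extension: `φ(z,v) = φ(z',v') = 1` and `φ₀` on `g₀`. -/
def extPhi {V : Type*} [AddCommGroup V] [Module ℝ V] (φ₀ : V → V → ℝ) :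
    (ℝ × ℝ × V × ℝ × ℝ) → (ℝ × ℝ × V × ℝ × ℝ) → ℝ :=
  fun P Q => P.1 * Q.2.2.2.2 + P.2.2.2.2 * Q.1 + P.2.1 * Q.2.2.2.1 + P.2.2.2.1 * Q.2.1
    + φ₀ P.2.2.1 Q.2.2.1

/-- The data `(D, F, s₀)` needed for a pHQ-double extension of `(g₀, br₀, J₀, φ₀)`:
`D`, `F` are `φ₀`-skewsymmetric derivations with `[F + J₀D, J₀] = 0` and
`[F, D] = ad_{g₀}(s₀)`. -/
def IsPHQDblExtData (V : Type*) [AddCommGroup V] [Module ℝ V]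
    (br₀ : V → V → V) (J₀ : V → V) (φ₀ : V → V → ℝ) (D F : V → V) (s₀ : V) : Prop :=
  (∀ x y, D (x + y) = D x + D y) ∧ (∀ (c : ℝ) (x : V), D (c • x) = c • D x) ∧
  (∀ x y, F (x + y) = F x + F y) ∧ (∀ (c : ℝ) (x : V), F (c • x) = c • F x) ∧
  (∀ x y, φ₀ (D x) y = - φ₀ x (D y)) ∧ (∀ x y, φ₀ (F x) y = - φ₀ x (F y)) ∧
  (∀ x y, D (br₀ x y) = br₀ (D x) y + br₀ x (D y)) ∧
  (∀ x y, F (br₀ x y) = br₀ (F x) y + br₀ x (F y)) ∧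
  (∀ x, F (J₀ x) + J₀ (D (J₀ x)) = J₀ (F x) + J₀ (J₀ (D x))) ∧
  (∀ x, F (D x) - D (F x) = br₀ s₀ x)

/-! ### Concrete models -/

/-- Standard complex structure on `ℝ²`. -/
def j2 : (Fin 2 → ℝ) → (Fin 2 → ℝ) := fun x => ![-x 1, x 0]

/-- Positive definite Hermitian metric on `ℝ²` (the algebra `ℝ^{2,0}`). -/
def phi2 : (Fin 2 → ℝ) → (Fin 2 → ℝ) → ℝ := fun x y => x 0 * y 0 + x 1 * y 1

/-- Complex structure of the 6-dimensional Lie algebra `ℒ`, on the ordered basis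
`x₁, Jx₁, x₂, Jx₂, x₃, Jx₃`. -/
def j6 : (Fin 6 → ℝ) → (Fin 6 → ℝ) := fun x => ![-x 1, x 0, -x 3, x 2, -x 5, x 4]

/-- Bracket of `ℒ`: `[x₁, Jx₁] = x₂`, `[x₁, x₂] = -Jx₃`, `[Jx₁, x₂] = x₃` on the
ordered basis `x₁, Jx₁, x₂, Jx₂, x₃, Jx₃`. -/
def brL : (Fin 6 → ℝ) → (Fin 6 → ℝ) → (Fin 6 → ℝ) := fun x y =>
  ![0, 0, x 0 * y 1 - x 1 * y 0, 0, x 1 * y 2 - x 2 * y 1, -(x 0 * y 2 - x 2 * y 0)]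

/-- The metric of `ℒ^{4,2}`: `φ(x₁,x₃) = φ(Jx₁,Jx₃) = 1`, `φ(x₂,x₂) = φ(Jx₂,Jx₂) = 1`. -/
def phiL : (Fin 6 → ℝ) → (Fin 6 → ℝ) → ℝ := fun x y =>
  x 0 * y 4 + x 4 * y 0 + x 1 * y 5 + x 5 * y 1 + x 2 * y 2 + x 3 * y 3

/-- Complex structure on `ℝ⁸`, ordered basis `x₁, x₂, x₃, x₄, x₁*, x₂*, x₃*, x₄*` with
`Jx₁ = x₂`, `Jx₃ = x₄`, `Jx₁* = x₂*`, `Jx₃* = x₄*`. -/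
def j8 : (Fin 8 → ℝ) → (Fin 8 → ℝ) := fun x =>
  ![-x 1, x 0, -x 3, x 2, -x 5, x 4, -x 7, x 6]

/-- The metric `φ(xᵢ, xⱼ*) = δᵢⱼ` of the `T*`-extensions of the Kodaira–Thurston algebra. -/
def phi8 : (Fin 8 → ℝ) → (Fin 8 → ℝ) → ℝ := fun x y =>
  x 0 * y 4 + x 4 * y 0 + x 1 * y 5 + x 5 * y 1 + x 2 * y 6 + x 6 * y 2
    + x 3 * y 7 + x 7 * y 3

/-- A neutral pseudo-Hermitian metric on abelian `ℝ⁸` (the algebra `ℝ^{4,4}`). -/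
def phi44 : (Fin 8 → ℝ) → (Fin 8 → ℝ) → ℝ := fun x y =>
  x 0 * y 0 + x 1 * y 1 + x 2 * y 2 + x 3 * y 3
    - x 4 * y 4 - x 5 * y 5 - x 6 * y 6 - x 7 * y 7

/-- Bracket of `T*₀k`: `[x₁,x₂] = x₃`, `[x₃*,x₁] = x₂*`, `[x₃*,x₂] = -x₁*`. -/
def brT0 : (Fin 8 → ℝ) → (Fin 8 → ℝ) → (Fin 8 → ℝ) := fun x y =>
  ![0, 0, x 0 * y 1 - x 1 * y 0, 0,
    -(x 6 * y 1 - x 1 * y 6), x 6 * y 0 - x 0 * y 6, 0, 0]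

/-- Bracket of `T*_{θ₃}k`: `[x₁,x₂] = x₃`, `[x₁,x₃] = x₄*`, `[x₁,x₄] = -x₃*`,
`[x₃,x₄] = x₁*`, `[x₃*,x₁] = x₂*`, `[x₃*,x₂] = -x₁*`. -/
def brT3 : (Fin 8 → ℝ) → (Fin 8 → ℝ) → (Fin 8 → ℝ) := fun x y =>
  ![0, 0, x 0 * y 1 - x 1 * y 0, 0,
    (x 2 * y 3 - x 3 * y 2) - (x 6 * y 1 - x 1 * y 6),
    x 6 * y 0 - x 0 * y 6,
    -(x 0 * y 3 - x 3 * y 0),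
    x 0 * y 2 - x 2 * y 0]

/-- Bracket of `T*_{αθ₁}k`: `[x₁,x₂] = x₃ + αx₃*`, `[x₁,x₃] = -αx₂*`, `[x₂,x₃] = αx₁*`,
`[x₃*,x₁] = x₂*`, `[x₃*,x₂] = -x₁*`. -/
def brTal (α : ℝ) : (Fin 8 → ℝ) → (Fin 8 → ℝ) → (Fin 8 → ℝ) := fun x y =>
  ![0, 0, x 0 * y 1 - x 1 * y 0, 0,
    α * (x 1 * y 2 - x 2 * y 1) - (x 6 * y 1 - x 1 * y 6),
    -(α * (x 0 * y 2 - x 2 * y 0)) + (x 6 * y 0 - x 0 * y 6),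
    α * (x 0 * y 1 - x 1 * y 0), 0]

/-- Bracket of the Kodaira–Thurston algebra `k`: `[x₁, x₂] = x₃`. -/
def brK : (Fin 4 → ℝ) → (Fin 4 → ℝ) → (Fin 4 → ℝ) := fun x y =>
  ![0, 0, x 0 * y 1 - x 1 * y 0, 0]

/-- The abelian complex structure of the Kodaira–Thurston algebra:
`Jx₁ = x₂`, `Jx₂ = -x₁`, `Jx₃ = x₄`, `Jx₄ = -x₃`. -/
def jK : (Fin 4 → ℝ) → (Fin 4 → ℝ) := fun x => ![-x 1, x 0, -x 3, x 2]

/-- The dual basis vectors `xᵢ*` of `k*`. -/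
noncomputable def p4 (i : Fin 4) : Module.Dual ℝ (Fin 4 → ℝ) := LinearMap.proj i

/-- The cyclic cocycle `θ₁`. -/
noncomputable def th1 : (Fin 4 → ℝ) → (Fin 4 → ℝ) → Module.Dual ℝ (Fin 4 → ℝ) := fun x y =>
  (x 0 * y 1 - x 1 * y 0) • p4 2 - (x 0 * y 2 - x 2 * y 0) • p4 1
    + (x 1 * y 2 - x 2 * y 1) • p4 0

/-- The cyclic cocycle `θ₂`. -/
noncomputable def th2 : (Fin 4 → ℝ) → (Fin 4 → ℝ) → Module.Dual ℝ (Fin 4 → ℝ) := fun x y =>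
  (x 0 * y 1 - x 1 * y 0) • p4 3 - (x 0 * y 3 - x 3 * y 0) • p4 1
    + (x 1 * y 3 - x 3 * y 1) • p4 0

/-- The cyclic cocycle `θ₃`. -/
noncomputable def th3 : (Fin 4 → ℝ) → (Fin 4 → ℝ) → Module.Dual ℝ (Fin 4 → ℝ) := fun x y =>
  (x 0 * y 2 - x 2 * y 0) • p4 3 - (x 0 * y 3 - x 3 * y 0) • p4 2
    + (x 2 * y 3 - x 3 * y 2) • p4 0

/-- The cyclic cocycle `θ₄`. -/
noncomputable def th4 : (Fin 4 → ℝ) → (Fin 4 → ℝ) → Module.Dual ℝ (Fin 4 → ℝ) := fun x y =>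
  (x 1 * y 2 - x 2 * y 1) • p4 3 - (x 1 * y 3 - x 3 * y 1) • p4 2
    + (x 2 * y 3 - x 3 * y 2) • p4 1


namespace PHQ9

variable {V : Type*} [AddCommGroup V] [Module ℝ V]
variable {br : V → V → V} {J : V → V} {φ : V → V → ℝ}

section basic
variable (h : IsPHQ V br J φ)
include h

lemma br_zero_left (y : V) : br 0 y = 0 := by
  have := h.br_smul_left 0 0 y; rwa [zero_smul, zero_smul] at this

lemma br_add_right (x y z : V) : br x (y + z) = br x y + br x z := by
  rw [h.br_skew x (y + z), h.br_add_left, neg_add, ← h.br_skew, ← h.br_skew]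

lemma br_smul_right (c : ℝ) (x y : V) : br x (c • y) = c • br x y := by
  rw [h.br_skew x (c • y), h.br_smul_left, ← smul_neg, ← h.br_skew]

lemma br_zero_right (x : V) : br x 0 = 0 := by
  rw [h.br_skew, br_zero_left h, neg_zero]

lemma br_self (x : V) : br x x = 0 := by
  have h2 : br x x + br x x = 0 := by nth_rewrite 2 [h.br_skew]; exact add_neg_cancel _
  have : (2 : ℝ) • br x x = 0 := by rw [two_smul]; exact h2
  simpa using this

lemma br_neg_left (x y : V) : br (-x) y = - br x y := by
  have := h.br_smul_left (-1) x y; simpa using this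

lemma br_neg_right (x y : V) : br x (-y) = - br x y := by
  have := br_smul_right h (-1) x y; simpa using this

lemma J_zero : J 0 = 0 := by
  have := h.J_smul 0 0; rwa [zero_smul, zero_smul] at this

lemma J_neg (x : V) : J (-x) = - J x := by
  have := h.J_smul (-1) x; simpa using this

lemma phi_add_right (x y z : V) : φ x (y + z) = φ x y + φ x z := by
  rw [h.phi_symm, h.phi_add_left, h.phi_symm y, h.phi_symm z]

lemma phi_smul_right (c : ℝ) (x y : V) : φ x (c • y) = c * φ x y := by
  rw [h.phi_symm, h.phi_smul_left, h.phi_symm]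

lemma phi_zero_left (y : V) : φ 0 y = 0 := by
  have := h.phi_smul_left 0 0 y; rwa [zero_smul, zero_mul] at this

lemma phi_zero_right (x : V) : φ x 0 = 0 := by
  rw [h.phi_symm]; exact phi_zero_left h x

lemma phi_neg_left (x y : V) : φ (-x) y = - φ x y := by
  have := h.phi_smul_left (-1) x y; simpa using this

lemma phi_neg_right (x y : V) : φ x (-y) = - φ x y := by
  rw [h.phi_symm, phi_neg_left h, h.phi_symm]

lemma phi_J_left (x y : V) : φ (J x) y = - φ x (J y) := by
  have h1 := h.phi_hermitian x (J y)
  rw [h.J_sq, phi_neg_right h] at h1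
  linarith

lemma phi_x_Jx (x : V) : φ x (J x) = 0 := by
  have h1 : φ (J x) x = - φ x (J x) := phi_J_left h x x
  rw [h.phi_symm x (J x)] at *
  linarith

lemma phi_br (x y w : V) : φ (br x y) w = - φ y (br x w) := by
  have := h.phi_invariant x y w; linarith

lemma phi_nondeg' (x : V) (hx : ∀ y, φ y x = 0) : x = 0 :=
  h.phi_nondeg x fun y => by rw [h.phi_symm]; exact hx y

/-- the identity `br (J x) (J y) = br x y + J (br (J x) y) + J (br x (J y))`. -/
lemma brJJ (x y : V) :
    br (J x) (J y) = br x y + J (br (J x) y) + J (br x (J y)) := by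
  have := h.integrable x y
  have h2 : br x y + J (br (J x) y) + J (br x (J y)) - br (J x) (J y) = 0 := this
  rw [sub_eq_zero] at h2; exact h2.symm

/-- `J` applied to a bracket. -/
lemma Jbr (x y : V) :
    J (br x y) = br (J x) y + J (br (J x) (J y)) + br x (J y) := by
  have h3 := brJJ h x y
  have h4 := congrArg J h3
  rw [h.J_add, h.J_add, h.J_sq, h.J_sq] at h4
  rw [h4]; abel

end basic

section defs
variable (h : IsPHQ V br J φ)

/-- the centre, as a submodule. -/
def ctr (h : IsPHQ V br J φ) : Submodule ℝ V where
  carrier := {x | ∀ y, br x y = 0}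
  add_mem' := fun ha hb => by intro y; rw [h.br_add_left, ha y, hb y, add_zero]
  zero_mem' := fun y => br_zero_left h y
  smul_mem' := fun c x hx => by intro y; rw [h.br_smul_left, hx y, smul_zero]

lemma mem_ctr {x : V} : x ∈ ctr h ↔ ∀ y, br x y = 0 := Iff.rfl

/-- `J` as a linear map. -/
def JL (h : IsPHQ V br J φ) : V →ₗ[ℝ] V where
  toFun := J
  map_add' := h.J_add
  map_smul' := h.J_smul

@[simp] lemma JL_apply (x : V) : JL h x = J x := rfl

/-- `φ` as a bilinear map. -/
def phiBil (h : IsPHQ V br J φ) : V →ₗ[ℝ] V →ₗ[ℝ] ℝ :=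
  LinearMap.mk₂ ℝ φ h.phi_add_left h.phi_smul_left (phi_add_right h) (phi_smul_right h)

@[simp] lemma phiBil_apply (x y : V) : phiBil h x y = φ x y := rfl

/-- orthogonal complement w.r.t. `φ`. -/
def prp (h : IsPHQ V br J φ) (M : Submodule ℝ V) : Submodule ℝ V where
  carrier := {x | ∀ m ∈ M, φ x m = 0}
  add_mem' := fun ha hb => by intro m hm; rw [h.phi_add_left, ha m hm, hb m hm, add_zero]
  zero_mem' := fun m hm => phi_zero_left h m
  smul_mem' := fun c x hx => by intro m hm; rw [h.phi_smul_left, hx m hm, mul_zero]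

lemma mem_prp {M : Submodule ℝ V} {x : V} : x ∈ prp h M ↔ ∀ m ∈ M, φ x m = 0 := Iff.rfl

lemma prp_eq_bot_imp_top [FiniteDimensional ℝ V] {M : Submodule ℝ V}
    (hp : prp h M = ⊥) : M = ⊤ := by
  classical
  set f : V →ₗ[ℝ] Module.Dual ℝ M := (M.subtype.dualMap).comp (phiBil h) with hf
  have hker : LinearMap.ker f = prp h M := by
    ext x
    simp only [LinearMap.mem_ker, hf, LinearMap.comp_apply, mem_prp]
    constructor
    · intro hx m hm
      have := congrArg (fun g => g ⟨m, hm⟩) hx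
      simpa using this
    · intro hx
      ext m
      simpa using hx m m.2
  have hinj : Function.Injective f := by
    rw [← LinearMap.ker_eq_bot, hker, hp]
  have h1 : Module.finrank ℝ V = Module.finrank ℝ (LinearMap.range f) :=
    (LinearMap.finrank_range_of_inj hinj).symm
  have h2 : Module.finrank ℝ (LinearMap.range f) ≤ Module.finrank ℝ (Module.Dual ℝ M) :=
    Submodule.finrank_le _
  have h3 : Module.finrank ℝ (Module.Dual ℝ M) = Module.finrank ℝ M :=
    Subspace.dual_finrank_eq
  have h4 : Module.finrank ℝ M = Module.finrank ℝ V :=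
    le_antisymm (Submodule.finrank_le _) (by omega)
  exact Submodule.eq_top_of_finrank_eq h4

lemma lcsW_succ (W : Submodule ℝ V) (k : ℕ) :
    lcsW br W (k + 1) =
      Submodule.span ℝ {w : V | ∃ x ∈ lcsW br W k, ∃ y ∈ W, w = br x y} := rfl

lemma mem_lcsW_succ {k : ℕ} {c : V} (hc : c ∈ lcsW br ⊤ k) (t : V) :
    br c t ∈ lcsW br ⊤ (k + 1) := by
  rw [lcsW_succ]
  exact Submodule.subset_span ⟨c, hc, t, trivial, rfl⟩

lemma mem_lcsW_succ' (h : IsPHQ V br J φ) {k : ℕ} {c : V} (hc : c ∈ lcsW br ⊤ k) (t : V) :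
    br t c ∈ lcsW br ⊤ (k + 1) := by
  rw [h.br_skew]
  exact neg_mem (mem_lcsW_succ hc t)

lemma lcsW_antitone : ∀ k : ℕ, lcsW br (⊤ : Submodule ℝ V) (k + 1) ≤ lcsW br ⊤ k := by
  intro k
  induction k with
  | zero => exact le_top
  | succ k ih =>
    rw [lcsW_succ]
    apply Submodule.span_le.2
    rintro w ⟨a, ha, b, -, rfl⟩
    exact mem_lcsW_succ (ih ha) b

lemma lcsW_le_one : ∀ k : ℕ, lcsW br (⊤ : Submodule ℝ V) (k + 1) ≤ lcsW br ⊤ 1 := by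
  intro k
  induction k with
  | zero => exact le_rfl
  | succ k ih => exact (lcsW_antitone (k+1)).trans ih

end defs


section main
variable [FiniteDimensional ℝ V] (h : IsPHQ V br J φ)
include h

lemma central_of_perp_C1 {x : V} (hx : ∀ c ∈ lcsW br (⊤ : Submodule ℝ V) 1, φ x c = 0) :
    ∀ y, br x y = 0 := by
  have key : ∀ y, br y x = 0 := by
    intro y
    apply phi_nondeg' h
    intro t
    have h1 := h.phi_invariant y t x
    have h2 : φ x (br y t) = 0 := hx _ (mem_lcsW_succ (Submodule.mem_top) t)
    rw [h.phi_symm (br y t) x] at h1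
    linarith
  intro y
  rw [h.br_skew, key y, neg_zero]

lemma main_lemma (hnilp : ∃ k, lcsW br (⊤ : Submodule ℝ V) k = ⊥)
    (hna : ∃ x y : V, br x y ≠ 0) :
    ∃ z₀ : V, z₀ ≠ 0 ∧ (∀ x, br z₀ x = 0) ∧ (∀ x, br (J z₀) x = 0) ∧ φ z₀ z₀ = 0 := by
  classical
  by_contra hcon
  push_neg at hcon
  set C : ℕ → Submodule ℝ V := lcsW br ⊤ with hC
  set X : Submodule ℝ V :=
    ctr h ⊔ C 1 ⊔ (ctr h).map (JL h) ⊔ (C 1).map (JL h) with hX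
  have hZX : ctr h ≤ X := (le_sup_left.trans le_sup_left).trans le_sup_left
  have hCX : C 1 ≤ X := (le_sup_right.trans le_sup_left).trans le_sup_left
  have hJZX : (ctr h).map (JL h) ≤ X := le_sup_right.trans le_sup_left
  have hJCX : (C 1).map (JL h) ≤ X := le_sup_right
  -- every element of prp X is zero
  have cl2 : ∀ x ∈ prp h X, x = 0 := by
    intro x hxp
    by_contra hx0
    have hperp : ∀ m ∈ X, φ x m = 0 := (mem_prp h).1 hxp
    have hxc : ∀ y, br x y = 0 :=
      central_of_perp_C1 h fun c hc => hperp c (hCX hc)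
    have hjxc : ∀ y, br (J x) y = 0 := by
      apply central_of_perp_C1 h
      intro c hc
      rw [phi_J_left h]
      have : J c ∈ X := hJCX ⟨c, hc, rfl⟩
      rw [hperp _ this, neg_zero]
    have hiso : φ x x = 0 := hperp x (hZX hxc)
    exact hcon x hx0 hxc hjxc hiso
  have cl3 : X = ⊤ := by
    apply prp_eq_bot_imp_top h
    rw [eq_bot_iff]
    intro x hx
    simpa using cl2 x hx
  -- the map J ∘ J sends a submodule into itself
  have hJJmap : ∀ N : Submodule ℝ V, (N.map (JL h)).map (JL h) ≤ N := by
    rintro N x ⟨y, ⟨w, hw, rfl⟩, rfl⟩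
    have : J (J w) = -w := h.J_sq w
    simp only [JL_apply, this]
    exact neg_mem hw
  -- inductive claim
  have cl5 : ∀ k : ℕ,
      ctr h ⊔ C (k + 1) ⊔ (ctr h).map (JL h) ⊔ (C (k + 1)).map (JL h) = ⊤ := by
    intro k
    induction k with
    | zero => exact cl3
    | succ k ih =>
      set M : Submodule ℝ V := C (k + 2) ⊔ (C (k + 2)).map (JL h) with hM
      have hCM : C (k + 2) ≤ M := le_sup_left
      have hJCM : (C (k + 2)).map (JL h) ≤ M := le_sup_right
      -- claim: C 1 ≤ M
      have hC1 : C 1 ≤ M := by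
        rw [hC, lcsW_succ]
        apply Submodule.span_le.2
        rintro w ⟨a, -, b, -, rfl⟩
        -- decompose a
        have ha : a ∈ ctr h ⊔ C (k + 1) ⊔ (ctr h).map (JL h) ⊔ (C (k + 1)).map (JL h) :=
          ih ▸ Submodule.mem_top
        obtain ⟨a3, ha3, jc, ⟨γ, hγ, rfl⟩, rfl⟩ := Submodule.mem_sup.1 ha
        obtain ⟨a2, ha2, jz, ⟨α, hα, rfl⟩, rfl⟩ := Submodule.mem_sup.1 ha3
        obtain ⟨az, haz, ac, hac, rfl⟩ := Submodule.mem_sup.1 ha2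
        rw [h.br_add_left, h.br_add_left, h.br_add_left]
        apply add_mem
        apply add_mem
        apply add_mem
        · -- az central
          rw [(mem_ctr h).1 haz b]; exact zero_mem _
        · -- ac ∈ C (k+1)
          exact hCM (mem_lcsW_succ hac b)
        · -- J α  with α central : decompose b
          have hb : b ∈ ctr h ⊔ C (k + 1) ⊔ (ctr h).map (JL h) ⊔ (C (k + 1)).map (JL h) :=
            ih ▸ Submodule.mem_top
          obtain ⟨b3, hb3, jd, ⟨δ, hδ, rfl⟩, rfl⟩ := Submodule.mem_sup.1 hb
          obtain ⟨b2, hb2, jw, ⟨β, hβ, rfl⟩, rfl⟩ := Submodule.mem_sup.1 hb3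
          obtain ⟨bz, hbz, bc, hbc, rfl⟩ := Submodule.mem_sup.1 hb2
          simp only [JL_apply]
          rw [br_add_right h, br_add_right h, br_add_right h]
          apply add_mem
          apply add_mem
          apply add_mem
          · rw [h.br_skew, (mem_ctr h).1 hbz (J α), neg_zero]; exact zero_mem _
          · exact hCM (mem_lcsW_succ' h hbc (J α))
          · rw [brJJ h α β, (mem_ctr h).1 hα β,
              show br (J α) β = 0 by rw [h.br_skew, (mem_ctr h).1 hβ (J α), neg_zero],
              show br α (J β) = 0 from (mem_ctr h).1 hα (J β), J_zero h]
            simpa using zero_mem M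
          · rw [brJJ h α δ, (mem_ctr h).1 hα δ,
              show br α (J δ) = 0 from (mem_ctr h).1 hα (J δ), J_zero h]
            have : br (J α) δ ∈ C (k + 2) := by
              rw [h.br_skew]; exact neg_mem (mem_lcsW_succ hδ (J α))
            have hmem : J (br (J α) δ) ∈ (C (k + 2)).map (JL h) := ⟨_, this, rfl⟩
            simpa using hJCM hmem
        · -- J γ with γ ∈ C (k+1) : decompose b
          have hb : b ∈ ctr h ⊔ C (k + 1) ⊔ (ctr h).map (JL h) ⊔ (C (k + 1)).map (JL h) :=
            ih ▸ Submodule.mem_top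
          obtain ⟨b3, hb3, jd, ⟨δ, hδ, rfl⟩, rfl⟩ := Submodule.mem_sup.1 hb
          obtain ⟨b2, hb2, jw, ⟨β, hβ, rfl⟩, rfl⟩ := Submodule.mem_sup.1 hb3
          obtain ⟨bz, hbz, bc, hbc, rfl⟩ := Submodule.mem_sup.1 hb2
          simp only [JL_apply]
          rw [br_add_right h, br_add_right h, br_add_right h]
          apply add_mem
          apply add_mem
          apply add_mem
          · rw [h.br_skew, (mem_ctr h).1 hbz (J γ), neg_zero]; exact zero_mem _
          · exact hCM (mem_lcsW_succ' h hbc (J γ))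
          · rw [brJJ h γ β,
              show br (J γ) β = 0 by rw [h.br_skew, (mem_ctr h).1 hβ (J γ), neg_zero],
              J_zero h]
            have h1 : br γ β ∈ C (k + 2) := mem_lcsW_succ hγ β
            have h2 : br γ (J β) ∈ C (k + 2) := mem_lcsW_succ hγ (J β)
            have h3 : J (br γ (J β)) ∈ (C (k + 2)).map (JL h) := ⟨_, h2, rfl⟩
            have := add_mem (add_mem (hCM h1) (hJCM (zero_mem _ : (0:V) ∈ _))) (hJCM h3)
            simpa using add_mem (add_mem (hCM h1) (zero_mem M)) (hJCM h3)
          · rw [brJJ h γ δ]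
            have h1 : br γ δ ∈ C (k + 2) := mem_lcsW_succ hγ δ
            have h2 : br (J γ) δ ∈ C (k + 2) := by
              rw [h.br_skew]; exact neg_mem (mem_lcsW_succ hδ (J γ))
            have h3 : br γ (J δ) ∈ C (k + 2) := mem_lcsW_succ hγ (J δ)
            exact add_mem (add_mem (hCM h1) (hJCM ⟨_, h2, rfl⟩)) (hJCM ⟨_, h3, rfl⟩)
      -- conclude the step
      rw [eq_top_iff, ← cl3, hX]
      apply sup_le
      apply sup_le
      apply sup_le
      · exact (le_sup_left.trans le_sup_left).trans le_sup_left
      · exact hC1.trans (sup_le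
          ((le_sup_right.trans le_sup_left).trans le_sup_left) le_sup_right)
      · exact (le_sup_right.trans le_sup_left)
      · -- map J (C 1) ≤ ...
        rintro x ⟨c, hc, rfl⟩
        have hcM := hC1 hc
        obtain ⟨u, hu, jw, ⟨w, hw, rfl⟩, rfl⟩ := Submodule.mem_sup.1 hcM
        simp only [JL_apply]
        rw [h.J_add, h.J_sq]
        apply add_mem
        · apply Submodule.mem_sup_right
          exact ⟨u, hu, rfl⟩
        · have hmw : -w ∈ C (k + 2) := neg_mem hw
          have hle : C (k + 2) ≤ ctr h ⊔ C (k + 2) ⊔ (ctr h).map (JL h) ⊔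
              (C (k + 2)).map (JL h) := (le_sup_right.trans le_sup_left).trans le_sup_left
          exact hle hmw
  -- terminal step
  obtain ⟨K, hK⟩ := hnilp
  obtain ⟨x, y, hxy⟩ := hna
  match K, hK with
  | 0, hK =>
    have : x ∈ (⊥ : Submodule ℝ V) := hK ▸ Submodule.mem_top
    rw [Submodule.mem_bot] at this
    exact hxy (by rw [this, br_zero_left h])
  | (K + 1), hK =>
    have hP := cl5 K
    rw [hK] at hP
    simp only [Submodule.map_bot, sup_bot_eq] at hP
    -- now ctr ⊔ map J ctr = ⊤
    have hx : x ∈ ctr h ⊔ (ctr h).map (JL h) := hP ▸ Submodule.mem_top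
    have hy : y ∈ ctr h ⊔ (ctr h).map (JL h) := hP ▸ Submodule.mem_top
    obtain ⟨ax, hax, jα, ⟨α, hα, rfl⟩, rfl⟩ := Submodule.mem_sup.1 hx
    obtain ⟨ay, hay, jβ, ⟨β, hβ, rfl⟩, rfl⟩ := Submodule.mem_sup.1 hy
    apply hxy
    simp only [JL_apply]
    rw [h.br_add_left, (mem_ctr h).1 hax, br_add_right h,
      show br (J α) ay = 0 by rw [h.br_skew, (mem_ctr h).1 hay, neg_zero],
      brJJ h α β, (mem_ctr h).1 hα β,
      show br (J α) β = 0 by rw [h.br_skew, (mem_ctr h).1 hβ, neg_zero],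
      (mem_ctr h).1 hα (J β), J_zero h]
    abel

end main
section existsv
variable (h : IsPHQ V br J φ)
include h

lemma exists_v {z : V} (hz : z ≠ 0) (hzz : φ z z = 0) :
    ∃ v : V, φ z v = 1 ∧ φ (J z) v = 0 ∧ φ v v = 0 := by
  classical
  -- first find v₁ with φ (J z) v₁ = 0 and φ z v₁ ≠ 0
  have hstep : ∃ v₁ : V, φ (J z) v₁ = 0 ∧ φ z v₁ ≠ 0 := by
    by_contra hcon
    push_neg at hcon
    -- hcon : ∀ v₁, φ (J z) v₁ = 0 → φ z v₁ = 0
    have hJz : J z ≠ 0 := by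
      intro h0
      apply hz
      have := congrArg J h0
      rw [h.J_sq, J_zero h] at this
      simpa using this.symm
    obtain ⟨u, hu⟩ : ∃ u, φ (J z) u ≠ 0 := by
      by_contra hcc
      push_neg at hcc
      exact hJz (h.phi_nondeg _ hcc)
    set t := φ (J z) u with ht
    have key : ∀ x, φ z x = (φ z u / t) * φ (J z) x := by
      intro x
      have h1 : φ (J z) (x - (φ (J z) x / t) • u) = 0 := by
        rw [show x - (φ (J z) x / t) • u = x + (-(φ (J z) x / t)) • u by module,
          phi_add_right h, phi_smul_right h]
        field_simp
        rw [← ht]; ring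
      have h2 := hcon _ h1
      rw [show x - (φ (J z) x / t) • u = x + (-(φ (J z) x / t)) • u by module,
        phi_add_right h, phi_smul_right h] at h2
      have h3 : φ z x = (φ (J z) x / t) * φ z u := by linarith
      rw [h3]; ring
    -- so z - c • J z kills everything
    set c := φ z u / t with hc
    have hzc : z = c • J z := by
      have : ∀ x, φ (z - c • J z) x = 0 := by
        intro x
        rw [show z - c • J z = z + (-c) • J z by module, h.phi_add_left, h.phi_smul_left]
        rw [key x]; ring
      have h0 := h.phi_nondeg _ this
      have : z - c • J z + c • J z = 0 + c • J z := by rw [h0]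
      simpa using this
    have hJzc : J z = - c • z := by
      have := congrArg J hzc
      rw [h.J_smul, h.J_sq] at this
      rw [this]; module
    have : z = (- (c * c)) • z := by
      nth_rewrite 1 [hzc]
      rw [hJzc]; module
    have h1 : (1 + c * c) • z = 0 := by
      nth_rewrite 1 [show (1:ℝ) + c * c = 1 - (-(c*c)) by ring]
      rw [sub_smul, one_smul]
      nth_rewrite 1 [this]
      module
    have h2 : (1 : ℝ) + c * c ≠ 0 := by nlinarith [sq_nonneg c]
    exact hz (by simpa [h2] using h1)
  obtain ⟨v₁, hv1, hv2⟩ := hstep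
  set v₂ := (φ z v₁)⁻¹ • v₁ with hv₂
  have hz2 : φ z v₂ = 1 := by
    rw [hv₂, phi_smul_right h]; field_simp
  have hJz2 : φ (J z) v₂ = 0 := by rw [hv₂, phi_smul_right h, hv1, mul_zero]
  clear_value v₂
  have hexp : v₂ - (φ v₂ v₂ / 2) • z = v₂ + (-(φ v₂ v₂ / 2)) • z := by module
  refine ⟨v₂ - (φ v₂ v₂ / 2) • z, ?_, ?_, ?_⟩
  · rw [hexp, phi_add_right h, hz2, phi_smul_right h, hzz]; ring
  · rw [hexp, phi_add_right h, hJz2, phi_smul_right h,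
      show φ (J z) z = 0 by rw [phi_J_left h, phi_x_Jx h, neg_zero]]
    ring
  · rw [hexp]
    simp only [phi_add_right h, h.phi_add_left, phi_smul_right h, h.phi_smul_left,
      hzz, hz2]
    rw [h.phi_symm v₂ z, hz2]
    ring

end existsv
section construction
variable [FiniteDimensional ℝ V] (h : IsPHQ V br J φ)
include h

set_option maxHeartbeats 1000000 in
lemma construction {K : ℕ} (hK : lcsW br (⊤ : Submodule ℝ V) K = ⊥)
    {n : ℕ} (hn : Module.finrank ℝ V = n) (h4 : 4 < n)
    {z v : V} (hz : ∀ x, br z x = 0) (hjz : ∀ x, br (J z) x = 0)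
    (hzz : φ z z = 0) (hzv : φ z v = 1) (hjzv : φ (J z) v = 0) (hvv : φ v v = 0) :
    ∃ (br₀ : (Fin (n - 4) → ℝ) → (Fin (n - 4) → ℝ) → (Fin (n - 4) → ℝ))
      (J₀ : (Fin (n - 4) → ℝ) → (Fin (n - 4) → ℝ))
      (φ₀ : (Fin (n - 4) → ℝ) → (Fin (n - 4) → ℝ) → ℝ)
      (D F : (Fin (n - 4) → ℝ) → (Fin (n - 4) → ℝ)) (s₀ : Fin (n - 4) → ℝ),
      IsPHQ (Fin (n - 4) → ℝ) br₀ J₀ φ₀ ∧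
      (∃ k, lcsW br₀ ⊤ k = ⊥) ∧
      IsPHQDblExtData (Fin (n - 4) → ℝ) br₀ J₀ φ₀ D F s₀ ∧
      PHQEquiv br J φ (extBr br₀ φ₀ D F s₀) (extJ J₀) (extPhi φ₀) := by
  classical
  set z' : V := J z with hz'def
  set v' : V := J v with hv'def
  -- Gram matrix facts
  have g_zz : φ z z = 0 := hzz
  have g_zz' : φ z z' = 0 := phi_x_Jx h z
  have g_zv : φ z v = 1 := hzv
  have g_zv' : φ z v' = 0 := by
    rw [hv'def]
    have := phi_J_left h z v
    rw [hjzv] at this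
    linarith
  have g_z'z' : φ z' z' = 0 := by rw [hz'def, h.phi_hermitian]; exact hzz
  have g_z'v : φ z' v = 0 := hjzv
  have g_z'v' : φ z' v' = 1 := by rw [hz'def, hv'def, h.phi_hermitian]; exact hzv
  have g_vv : φ v v = 0 := hvv
  have g_vv' : φ v v' = 0 := phi_x_Jx h v
  have g_v'v' : φ v' v' = 0 := by rw [hv'def, h.phi_hermitian]; exact hvv
  -- centrality
  have hz' : ∀ x, br z' x = 0 := hjz
  have hzr : ∀ x, br x z = 0 := fun x => by rw [h.br_skew, hz x, neg_zero]
  have hz'r : ∀ x, br x z' = 0 := fun x => by rw [h.br_skew, hz' x, neg_zero]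
  -- the linear functional package
  set L : V →ₗ[ℝ] (Fin 4 → ℝ) :=
    { toFun := fun x => ![φ z x, φ z' x, φ v x, φ v' x]
      map_add' := by
        intro a b; funext i
        fin_cases i <;> simp [phi_add_right h]
      map_smul' := by
        intro c a; funext i
        fin_cases i <;> simp [phi_smul_right h] } with hLdef
  have hLapp : ∀ x, L x = ![φ z x, φ z' x, φ v x, φ v' x] := fun x => rfl
  have hLz : L z = ![0, 0, 1, 0] := by
    rw [hLapp]; funext i
    fin_cases i <;>
      simp [g_zz, h.phi_symm z' z, g_zz', h.phi_symm v z, g_zv, h.phi_symm v' z, g_zv']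
  have hLz' : L z' = ![0, 0, 0, 1] := by
    rw [hLapp]; funext i
    fin_cases i <;>
      simp [g_zz', g_z'z', h.phi_symm v z', g_z'v, h.phi_symm v' z', g_z'v']
  have hLv : L v = ![1, 0, 0, 0] := by
    rw [hLapp]; funext i
    fin_cases i <;> simp [g_zv, g_z'v, g_vv, h.phi_symm v' v, g_vv']
  have hLv' : L v' = ![0, 1, 0, 0] := by
    rw [hLapp]; funext i
    fin_cases i <;> simp [g_zv', g_z'v', g_vv', g_v'v']
  have hLsur : LinearMap.range L = ⊤ := by
    rw [← top_le_iff]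
    rintro u -
    have : u = L (u 0 • v + u 1 • v' + u 2 • z + u 3 • z') := by
      rw [map_add, map_add, map_add, map_smul, map_smul, map_smul, map_smul,
        hLv, hLv', hLz, hLz']
      funext i; fin_cases i <;> simp
    exact ⟨_, this.symm⟩
  set G₀ : Submodule ℝ V := LinearMap.ker L with hG₀def
  have hG₀rank : Module.finrank ℝ G₀ = n - 4 := by
    have h1 := LinearMap.finrank_range_add_finrank_ker L
    rw [hLsur, finrank_top] at h1
    have h2 : Module.finrank ℝ (Fin 4 → ℝ) = 4 := by
      simp [Module.finrank_fin_fun]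
    rw [← hG₀def] at h1
    omega
  have hmemG₀ : ∀ x : V, x ∈ G₀ ↔
      (φ z x = 0 ∧ φ z' x = 0 ∧ φ v x = 0 ∧ φ v' x = 0) := by
    intro x
    rw [hG₀def, LinearMap.mem_ker, hLapp]
    constructor
    · intro hx
      exact ⟨congrFun hx 0, congrFun hx 1, congrFun hx 2, congrFun hx 3⟩
    · rintro ⟨h1, h2, h3, h4⟩
      funext i; fin_cases i <;> simp [h1, h2, h3, h4]
  have hFrank : Module.finrank ℝ (Fin (n - 4) → ℝ) = n - 4 := Module.finrank_fin_fun ℝ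
  set e : G₀ ≃ₗ[ℝ] (Fin (n - 4) → ℝ) :=
    LinearEquiv.ofFinrankEq _ _ (by rw [hG₀rank, hFrank]) with hedef
  set π : V → V := fun w =>
    w + (-(φ w v)) • z + (-(φ w v')) • z' + (-(φ w z)) • v + (-(φ w z')) • v' with hπdef
  have hπapp : ∀ w, π w =
      w + (-(φ w v)) • z + (-(φ w v')) • z' + (-(φ w z)) • v + (-(φ w z')) • v' :=
    fun w => rfl
  have hπmem : ∀ w, π w ∈ G₀ := by
    intro w
    rw [hmemG₀]
    refine ⟨?_, ?_, ?_, ?_⟩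
    · simp only [hπapp, phi_add_right h, phi_smul_right h, g_zz, g_zz', g_zv, g_zv']
      rw [h.phi_symm z w]; ring
    · simp only [hπapp, phi_add_right h, phi_smul_right h,
        h.phi_symm z' z, g_zz', g_z'z', g_z'v, g_z'v']
      rw [h.phi_symm z' w]; ring
    · simp only [hπapp, phi_add_right h, phi_smul_right h,
        h.phi_symm v z, h.phi_symm v z', g_zv, g_z'v, g_vv, g_vv']
      rw [h.phi_symm v w]; ring
    · simp only [hπapp, phi_add_right h, phi_smul_right h,
        h.phi_symm v' z, h.phi_symm v' z', h.phi_symm v' v, g_zv', g_z'v', g_vv', g_v'v']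
      rw [h.phi_symm v' w]; ring
  set ι : (Fin (n - 4) → ℝ) → V := fun ξ => ((e.symm ξ : G₀) : V) with hιdef
  set p : V → (Fin (n - 4) → ℝ) := fun w => e ⟨π w, hπmem w⟩ with hpdef
  have hιmem : ∀ ξ, ι ξ ∈ G₀ := fun ξ => (e.symm ξ).2
  have hpapp : ∀ w, p w = e ⟨π w, hπmem w⟩ := fun w => rfl
  have hιapp : ∀ ξ, ι ξ = ((e.symm ξ : G₀) : V) := fun ξ => rfl
  have hι_p : ∀ w, ι (p w) = π w := by
    intro w; rw [hιdef, hpdef]; simp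
  have hπfix : ∀ x, x ∈ G₀ → π x = x := by
    intro x hx
    obtain ⟨h1, h2, h3, h4⟩ := (hmemG₀ x).1 hx
    have e1 : φ x v = 0 := (h.phi_symm x v).trans h3
    have e2 : φ x v' = 0 := (h.phi_symm x v').trans h4
    have e3 : φ x z = 0 := (h.phi_symm x z).trans h1
    have e4 : φ x z' = 0 := (h.phi_symm x z').trans h2
    rw [hπapp, e1, e2, e3, e4]
    simp
  have hp_ι : ∀ ξ, p (ι ξ) = ξ := by
    intro ξ
    rw [hpapp]
    have hsub : (⟨π (ι ξ), hπmem _⟩ : G₀) = e.symm ξ :=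
      Subtype.ext (show π (ι ξ) = _ from hπfix _ (hιmem ξ))
    rw [hsub]; simp
  -- linearity of ι and p
  have hι_add : ∀ ξ η, ι (ξ + η) = ι ξ + ι η := by
    intro ξ η; rw [hιdef]; simp
  have hι_smul : ∀ (c : ℝ) ξ, ι (c • ξ) = c • ι ξ := by
    intro c ξ; rw [hιdef]; simp
  have hι_zero : ι 0 = 0 := by rw [hιdef]; simp
  have hι_neg : ∀ ξ, ι (-ξ) = - ι ξ := by intro ξ; rw [hιdef]; simp
  have hι_inj : ∀ ξ, ι ξ = 0 → ξ = 0 := by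
    intro ξ hξ
    have := hp_ι ξ
    rw [hξ] at this
    rw [← this, hpapp]
    have hsub : (⟨π 0, hπmem 0⟩ : G₀) = 0 :=
      Subtype.ext (show π 0 = _ by rw [hπapp]; simp [phi_zero_left h])
    rw [hsub]; simp
  have hπ_add : ∀ a b, π (a + b) = π a + π b := by
    intro a b
    rw [hπapp, hπapp, hπapp]
    simp only [h.phi_add_left]
    module
  have hπ_smul : ∀ (c : ℝ) a, π (c • a) = c • π a := by
    intro c a
    rw [hπapp, hπapp]
    simp only [h.phi_smul_left]
    module
  have hp_add : ∀ a b, p (a + b) = p a + p b := by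
    intro a b
    rw [hpapp, hpapp, hpapp]
    have hsub : (⟨π (a + b), hπmem _⟩ : G₀) = ⟨π a, hπmem a⟩ + ⟨π b, hπmem b⟩ :=
      Subtype.ext (show π (a + b) = _ by rw [hπ_add]; rfl)
    rw [hsub, map_add]
  have hp_smul : ∀ (c : ℝ) a, p (c • a) = c • p a := by
    intro c a
    rw [hpapp, hpapp]
    have hsub : (⟨π (c • a), hπmem _⟩ : G₀) = c • ⟨π a, hπmem a⟩ :=
      Subtype.ext (show π (c • a) = _ by rw [hπ_smul]; rfl)
    rw [hsub, map_smul]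
  have hp_zero : p 0 = 0 := by
    rw [hpapp]
    have hsub : (⟨π 0, hπmem 0⟩ : G₀) = 0 :=
      Subtype.ext (show π 0 = _ by rw [hπapp]; simp [phi_zero_left h])
    rw [hsub]; simp
  have hp_neg : ∀ a, p (-a) = - p a := by
    intro a
    have := hp_smul (-1) a
    simpa using this
  have hπ_z : π z = 0 := by
    rw [hπapp, g_zv, g_zv', g_zz, g_zz']; simp
  have hπ_z' : π z' = 0 := by
    rw [hπapp, g_z'v, g_z'v', h.phi_symm z' z, g_zz', g_z'z']
    simp
  have hπ_v : π v = 0 := by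
    rw [hπapp, h.phi_symm v z, h.phi_symm v z', g_vv, g_vv', g_zv, g_z'v]; simp
  have hπ_v' : π v' = 0 := by
    rw [hπapp, h.phi_symm v' z, h.phi_symm v' z', h.phi_symm v' v,
      g_vv', g_v'v', g_zv', g_z'v']
    simp
  have hp_z : p z = 0 := by
    rw [hpapp]
    have hsub : (⟨π z, hπmem z⟩ : G₀) = 0 :=
      Subtype.ext (show π z = _ by rw [hπ_z]; rfl)
    rw [hsub]; simp
  have hp_z' : p z' = 0 := by
    rw [hpapp]
    have hsub : (⟨π z', hπmem z'⟩ : G₀) = 0 :=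
      Subtype.ext (show π z' = _ by rw [hπ_z']; rfl)
    rw [hsub]; simp
  have hp_v : p v = 0 := by
    rw [hpapp]
    have hsub : (⟨π v, hπmem v⟩ : G₀) = 0 :=
      Subtype.ext (show π v = _ by rw [hπ_v]; rfl)
    rw [hsub]; simp
  have hp_v' : p v' = 0 := by
    rw [hpapp]
    have hsub : (⟨π v', hπmem v'⟩ : G₀) = 0 :=
      Subtype.ext (show π v' = _ by rw [hπ_v']; rfl)
    rw [hsub]; simp
  -- the decomposition of a general element
  have hdec : ∀ w : V, w = ι (p w) + φ w v • z + φ w v' • z' + φ w z • v + φ w z' • v' := by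
    intro w
    rw [hι_p, hπapp]
    module
  -- orthogonality of G₀ elements
  have hφιz : ∀ ξ, φ (ι ξ) z = 0 := fun ξ =>
    (h.phi_symm _ _).trans ((hmemG₀ _).1 (hιmem ξ)).1
  have hφιz' : ∀ ξ, φ (ι ξ) z' = 0 := fun ξ =>
    (h.phi_symm _ _).trans ((hmemG₀ _).1 (hιmem ξ)).2.1
  have hφιv : ∀ ξ, φ (ι ξ) v = 0 := fun ξ =>
    (h.phi_symm _ _).trans ((hmemG₀ _).1 (hιmem ξ)).2.2.1
  have hφιv' : ∀ ξ, φ (ι ξ) v' = 0 := fun ξ =>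
    (h.phi_symm _ _).trans ((hmemG₀ _).1 (hιmem ξ)).2.2.2
  -- brackets are orthogonal to z, z'
  have hbrz : ∀ a b, φ (br a b) z = 0 := by
    intro a b; rw [phi_br h, hzr a, phi_zero_right h, neg_zero]
  have hbrz' : ∀ a b, φ (br a b) z' = 0 := by
    intro a b; rw [phi_br h, hz'r a, phi_zero_right h, neg_zero]
  -- the structure maps on the model space
  set br₀ : (Fin (n-4) → ℝ) → (Fin (n-4) → ℝ) → (Fin (n-4) → ℝ) :=
    fun ξ η => p (br (ι ξ) (ι η)) with hbr₀def
  set J₀ : (Fin (n-4) → ℝ) → (Fin (n-4) → ℝ) := fun ξ => p (J (ι ξ)) with hJ₀def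
  set φ₀ : (Fin (n-4) → ℝ) → (Fin (n-4) → ℝ) → ℝ :=
    fun ξ η => φ (ι ξ) (ι η) with hφ₀def
  set DD : (Fin (n-4) → ℝ) → (Fin (n-4) → ℝ) := fun ξ => p (br v' (ι ξ)) with hDDdef
  set FF : (Fin (n-4) → ℝ) → (Fin (n-4) → ℝ) := fun ξ => p (br v (ι ξ)) with hFFdef
  set s₀ : (Fin (n-4) → ℝ) := p (br v v') with hs₀def
  have hbr₀app : ∀ ξ η, br₀ ξ η = p (br (ι ξ) (ι η)) := fun _ _ => rfl
  have hJ₀app : ∀ ξ, J₀ ξ = p (J (ι ξ)) := fun _ => rfl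
  have hφ₀app : ∀ ξ η, φ₀ ξ η = φ (ι ξ) (ι η) := fun _ _ => rfl
  have hDDapp : ∀ ξ, DD ξ = p (br v' (ι ξ)) := fun _ => rfl
  have hFFapp : ∀ ξ, FF ξ = p (br v (ι ξ)) := fun _ => rfl
  -- G₀ is J-invariant
  have hJG₀ : ∀ x, x ∈ G₀ → J x ∈ G₀ := by
    intro x hx
    obtain ⟨h1, h2, h3, h4⟩ := (hmemG₀ x).1 hx
    rw [hmemG₀]
    refine ⟨?_, ?_, ?_, ?_⟩
    · rw [show φ z (J x) = - φ (J z) x by have := phi_J_left h z x; linarith, ← hz'def, h2,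
        neg_zero]
    · rw [hz'def, phi_J_left h, h.J_sq, phi_neg_right h, h.phi_symm, h.phi_symm x z, h1]
      simp
    · rw [show φ v (J x) = - φ (J v) x by have := phi_J_left h v x; linarith, ← hv'def, h4,
        neg_zero]
    · rw [hv'def, phi_J_left h, h.J_sq, phi_neg_right h, h.phi_symm, h.phi_symm x v, h3]
      simp
  have hιJ : ∀ ξ, ι (J₀ ξ) = J (ι ξ) := by
    intro ξ
    rw [hJ₀app, hι_p]
    exact hπfix _ (hJG₀ _ (hιmem ξ))
  -- decomposition of brackets
  have hdecbr : ∀ a b, br a b = ι (p (br a b)) + φ (br a b) v • z + φ (br a b) v' • z' := by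
    intro a b
    have hd := hdec (br a b)
    rw [hbrz, hbrz'] at hd
    exact hd.trans (by simp)
  -- K4 : br v v' = ι s₀
  have hco1 : φ (br v v') v = 0 := by
    rw [phi_br h, br_self h, phi_zero_right h, neg_zero]
  have hco2 : φ (br v v') v' = 0 := by
    have h1 : φ (br v v') v' = - φ v' (br v v') := phi_br h v v' v'
    have h2 : φ v' (br v v') = φ (br v v') v' := h.phi_symm _ _
    linarith
  have K4 : br v v' = ι s₀ := by
    have hd := hdecbr v v'
    rw [hco1, hco2] at hd
    rw [hd, hs₀def]; simp
  have K4' : br v' v = - ι s₀ := by rw [h.br_skew, K4]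
  -- K2 : br v (ι ξ)
  have K2 : ∀ ξ, br v (ι ξ) = ι (FF ξ) + (-(φ₀ s₀ ξ)) • z' := by
    intro ξ
    have c1 : φ (br v (ι ξ)) v = 0 := by
      rw [phi_br h, br_self h, phi_zero_right h, neg_zero]
    have c2 : φ (br v (ι ξ)) v' = -(φ₀ s₀ ξ) := by
      rw [phi_br h, K4, h.phi_symm (ι ξ) (ι s₀), hφ₀app]
    have hd := hdecbr v (ι ξ)
    rw [c1, c2, ← hFFapp] at hd
    rw [hd]; simp
  have K2' : ∀ ξ, br (ι ξ) v = - ι (FF ξ) + (φ₀ s₀ ξ) • z' := by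
    intro ξ
    rw [h.br_skew, K2]
    module
  -- K3 : br v' (ι ξ)
  have K3 : ∀ ξ, br v' (ι ξ) = ι (DD ξ) + (φ₀ s₀ ξ) • z := by
    intro ξ
    have c1 : φ (br v' (ι ξ)) v = φ₀ s₀ ξ := by
      rw [phi_br h, K4', phi_neg_right h, neg_neg, h.phi_symm (ι ξ) (ι s₀), hφ₀app]
    have c2 : φ (br v' (ι ξ)) v' = 0 := by
      rw [phi_br h, br_self h, phi_zero_right h, neg_zero]
    have hd := hdecbr v' (ι ξ)
    rw [c1, c2, ← hDDapp] at hd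
    rw [hd]; simp
  have K3' : ∀ ξ, br (ι ξ) v' = - ι (DD ξ) + (-(φ₀ s₀ ξ)) • z := by
    intro ξ
    rw [h.br_skew, K3]
    module
  -- K1 : br (ι ξ) (ι η)
  have K1 : ∀ ξ η, br (ι ξ) (ι η) =
      ι (br₀ ξ η) + (φ₀ (FF ξ) η) • z + (φ₀ (DD ξ) η) • z' := by
    intro ξ η
    have c1 : φ (br (ι ξ) (ι η)) v = φ₀ (FF ξ) η := by
      rw [phi_br h, show br (ι ξ) v = - br v (ι ξ) from h.br_skew _ _, K2 ξ,
        phi_neg_right h, phi_add_right h, phi_smul_right h, hφιz' η,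
        h.phi_symm (ι η) (ι (FF ξ)), hφ₀app]
      ring
    have c2 : φ (br (ι ξ) (ι η)) v' = φ₀ (DD ξ) η := by
      rw [phi_br h, show br (ι ξ) v' = - br v' (ι ξ) from h.br_skew _ _, K3 ξ,
        phi_neg_right h, phi_add_right h, phi_smul_right h, hφιz η,
        h.phi_symm (ι η) (ι (DD ξ)), hφ₀app]
      ring
    have hd := hdecbr (ι ξ) (ι η)
    rw [c1, c2, ← hbr₀app] at hd
    exact hd
  -- reversed Gram entries and orthogonality
  have gr1 : φ z' z = 0 := by rw [h.phi_symm]; exact g_zz'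
  have gr2 : φ v z = 1 := by rw [h.phi_symm]; exact g_zv
  have gr3 : φ v z' = 0 := by rw [h.phi_symm]; exact g_z'v
  have gr4 : φ v' z = 0 := by rw [h.phi_symm]; exact g_zv'
  have gr5 : φ v' z' = 1 := by rw [h.phi_symm]; exact g_z'v'
  have gr6 : φ v' v = 0 := by rw [h.phi_symm]; exact g_vv'
  have hφzι : ∀ ξ, φ z (ι ξ) = 0 := fun ξ => ((hmemG₀ _).1 (hιmem ξ)).1
  have hφz'ι : ∀ ξ, φ z' (ι ξ) = 0 := fun ξ => ((hmemG₀ _).1 (hιmem ξ)).2.1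
  have hφvι : ∀ ξ, φ v (ι ξ) = 0 := fun ξ => ((hmemG₀ _).1 (hιmem ξ)).2.2.1
  have hφv'ι : ∀ ξ, φ v' (ι ξ) = 0 := fun ξ => ((hmemG₀ _).1 (hιmem ξ)).2.2.2
  -- J on the distinguished vectors
  have hJz : J z = z' := hz'def.symm
  have hJv : J v = v' := hv'def.symm
  have hJz' : J z' = -z := by rw [hz'def, h.J_sq]
  have hJv' : J v' = -v := by rw [hv'def, h.J_sq]
  have hι_sub : ∀ ξ η, ι (ξ - η) = ι ξ - ι η := by
    intro ξ η
    rw [sub_eq_add_neg, hι_add, hι_neg, sub_eq_add_neg]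
  -- the linear equivalence with the model
  set ψf : V → (ℝ × ℝ × (Fin (n-4) → ℝ) × ℝ × ℝ) :=
    fun w => (φ w v, φ w v', p w, φ w z', φ w z) with hψfdef
  set Θf : (ℝ × ℝ × (Fin (n-4) → ℝ) × ℝ × ℝ) → V :=
    fun P => P.1 • z + P.2.1 • z' + ι P.2.2.1 + P.2.2.2.1 • v' + P.2.2.2.2 • v with hΘfdef
  have hψfapp : ∀ w, ψf w = (φ w v, φ w v', p w, φ w z', φ w z) := fun _ => rfl
  have hΘfapp : ∀ P, Θf P = P.1 • z + P.2.1 • z' + ι P.2.2.1 + P.2.2.2.1 • v' +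
      P.2.2.2.2 • v := fun _ => rfl
  have hleft : ∀ w, Θf (ψf w) = w := by
    intro w
    rw [hΘfapp, hψfapp]
    dsimp only
    conv_rhs => rw [hdec w]
    module
  have hright : ∀ P, ψf (Θf P) = P := by
    rintro ⟨a, b, ξ, c, d⟩
    rw [hΘfapp, hψfapp]
    dsimp only
    have e1 : φ (a • z + b • z' + ι ξ + c • v' + d • v) v = a := by
      simp only [h.phi_add_left, h.phi_smul_left, g_zv, g_z'v, hφιv, gr6, g_vv]
      ring
    have e2 : φ (a • z + b • z' + ι ξ + c • v' + d • v) v' = b := by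
      simp only [h.phi_add_left, h.phi_smul_left, g_zv', g_z'v', hφιv', g_v'v', g_vv']
      ring
    have e3 : p (a • z + b • z' + ι ξ + c • v' + d • v) = ξ := by
      rw [hp_add, hp_add, hp_add, hp_add, hp_smul, hp_smul, hp_smul, hp_smul,
        hp_z, hp_z', hp_v, hp_v', hp_ι]
      simp
    have e4 : φ (a • z + b • z' + ι ξ + c • v' + d • v) z' = c := by
      simp only [h.phi_add_left, h.phi_smul_left, g_zz', g_z'z', hφιz', gr5, gr3]
      ring
    have e5 : φ (a • z + b • z' + ι ξ + c • v' + d • v) z = d := by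
      simp only [h.phi_add_left, h.phi_smul_left, g_zz, gr1, hφιz, gr4, gr2]
      ring
    rw [e1, e2, e3, e4, e5]
  set ψ : V ≃ₗ[ℝ] (ℝ × ℝ × (Fin (n-4) → ℝ) × ℝ × ℝ) :=
    { toFun := ψf
      map_add' := by
        intro a b
        rw [hψfapp, hψfapp, hψfapp]
        simp only [h.phi_add_left, hp_add]
        rfl
      map_smul' := by
        intro c a
        show ψf (c • a) = c • ψf a
        rw [hψfapp, hψfapp]
        simp only [h.phi_smul_left, hp_smul]
        rfl
      invFun := Θf
      left_inv := hleft
      right_inv := hright } with hψdef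
  have hψapp : ∀ w, ψ w = (φ w v, φ w v', p w, φ w z', φ w z) := fun _ => rfl
  -- condition on J
  have condJ : ∀ w, ψ (J w) = extJ J₀ (ψ w) := by
    intro w
    rw [hψapp, hψapp]
    simp only [extJ]
    have c1 : φ (J w) v = - φ w v' := by
      rw [show φ (J w) v = - φ w (J v) from phi_J_left h w v, hJv]
    have c2 : φ (J w) v' = φ w v := by rw [← hJv, h.phi_hermitian]
    have c3 : p (J w) = J₀ (p w) := by
      have hJw : J w = J (ι (p w)) + φ w v • z' + φ w v' • (-z) + φ w z • v' +
          φ w z' • (-v) := by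
        conv_lhs => rw [hdec w]
        rw [h.J_add, h.J_add, h.J_add, h.J_add, h.J_smul, h.J_smul, h.J_smul, h.J_smul,
          hJz, hJz', hJv, hJv']
      rw [hJw, hp_add, hp_add, hp_add, hp_add, hp_smul, hp_smul, hp_smul, hp_smul,
        hp_z', show p (-z) = 0 by rw [hp_neg, hp_z, neg_zero], hp_v',
        show p (-v) = 0 by rw [hp_neg, hp_v, neg_zero], hJ₀app]
      simp
    have c4 : φ (J w) z' = φ w z := by rw [← hJz, h.phi_hermitian]
    have c5 : φ (J w) z = - φ w z' := by
      rw [show φ (J w) z = - φ w (J z) from phi_J_left h w z, hJz]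
    rw [c1, c2, c3, c4, c5]
  -- condition on φ
  have condPhi : ∀ x y, extPhi φ₀ (ψ x) (ψ y) = φ x y := by
    intro x y
    rw [hψapp, hψapp]
    simp only [extPhi]
    rw [hφ₀app]
    conv_rhs => rw [hdec x, hdec y]
    simp only [h.phi_add_left, phi_add_right h, h.phi_smul_left, phi_smul_right h,
      g_zz, g_zz', g_zv, g_zv', g_z'z', g_z'v, g_z'v', g_vv, g_vv', g_v'v',
      gr1, gr2, gr3, gr4, gr5, gr6, hφzι, hφz'ι, hφvι, hφv'ι, hφιz, hφιz', hφιv, hφιv']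
    ring
  -- condition on the bracket
  have condBr : ∀ x y, ψ (br x y) = extBr br₀ φ₀ DD FF s₀ (ψ x) (ψ y) := by
    intro x y
    have key : br x y = Θf (extBr br₀ φ₀ DD FF s₀ (ψ x) (ψ y)) := by
      rw [hψapp, hψapp]
      simp only [extBr]
      rw [hΘfapp]
      dsimp only
      conv_lhs => rw [hdec x, hdec y]
      simp only [h.br_add_left, br_add_right h, h.br_smul_left, br_smul_right h]
      simp only [hz, hz', hzr, hz'r, br_self h, K4, K4', K1, K2, K2', K3, K3']
      simp only [hι_add, hι_sub, hι_smul]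
      module
    have happ := ψ.apply_symm_apply (extBr br₀ φ₀ DD FF s₀ (ψ x) (ψ y))
    rw [key]
    exact happ
  -- general helper identities
  have hιp_gen : ∀ w, ι (p w) =
      w + (-(φ w v)) • z + (-(φ w v')) • z' + (-(φ w z)) • v + (-(φ w z')) • v' := by
    intro w; rw [hι_p, hπapp]
  have hp_sub : ∀ a b, p (a - b) = p a - p b := by
    intro a b
    rw [sub_eq_add_neg, hp_add, hp_neg, sub_eq_add_neg]
  have hJ_sub : ∀ a b, J (a - b) = J a - J b := by
    intro a b
    rw [sub_eq_add_neg, h.J_add, J_neg h, sub_eq_add_neg]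
  have hbrιp : ∀ u a b, br u (ι (p (br a b))) = br u (br a b) := by
    intro u a b
    rw [hιp_gen, hbrz, hbrz']
    rw [br_add_right h, br_add_right h, br_add_right h, br_add_right h,
      br_smul_right h, br_smul_right h, br_smul_right h, br_smul_right h,
      hzr u, hz'r u]
    simp
  have hbrιp' : ∀ u a b, br (ι (p (br a b))) u = br (br a b) u := by
    intro u a b
    rw [h.br_skew, hbrιp, ← h.br_skew]
  have hpJ : ∀ w, p (J (ι (p w))) = p (J w) := by
    intro w
    rw [hιp_gen w, h.J_add, h.J_add, h.J_add, h.J_add, h.J_smul, h.J_smul, h.J_smul,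
      h.J_smul, hJz, hJz', hJv, hJv', hp_add, hp_add, hp_add, hp_add, hp_smul, hp_smul,
      hp_smul, hp_smul, hp_z']
    rw [show p (-z) = 0 by rw [hp_neg, hp_z, neg_zero], hp_v',
      show p (-v) = 0 by rw [hp_neg, hp_v, neg_zero]]
    simp
  have hφιpbr : ∀ a b ξ, φ (ι (p (br a b))) (ι ξ) = φ (br a b) (ι ξ) := by
    intro a b ξ
    rw [hιp_gen, hbrz, hbrz']
    rw [h.phi_add_left, h.phi_add_left, h.phi_add_left, h.phi_add_left,
      h.phi_smul_left, h.phi_smul_left, h.phi_smul_left, h.phi_smul_left,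
      hφzι, hφz'ι, hφvι, hφv'ι]
    ring
  have hφιpbr' : ∀ a b ξ, φ (ι ξ) (ι (p (br a b))) = φ (ι ξ) (br a b) := by
    intro a b ξ
    rw [h.phi_symm, hφιpbr, h.phi_symm]
  have hjac : ∀ x a b, br x (br a b) = br (br x a) b + br a (br x b) := by
    intro x a b
    have hj := h.jacobi x a b
    rw [h.br_skew b x, br_neg_right h, h.br_skew b (br x a)] at hj
    calc br x (br a b)
        = (br x (br a b) + -(br a (br x b)) + -(br (br x a) b)) +
            (br (br x a) b + br a (br x b)) := by abel
      _ = br (br x a) b + br a (br x b) := by rw [hj]; abel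
  -- J₀ squares to -1
  have hJ₀sq : ∀ ξ, J₀ (J₀ ξ) = -ξ := by
    intro ξ
    rw [hJ₀app, hιJ, h.J_sq, hp_neg, hp_ι]
  -- the pHQ structure on the model
  have hIsPHQ : IsPHQ (Fin (n-4) → ℝ) br₀ J₀ φ₀ := by
    refine ⟨?_, ?_, ?_, ?_, ?_, ?_, ?_, ?_, ?_, ?_, ?_, ?_, ?_, ?_⟩
    · intro a b c
      rw [hbr₀app, hbr₀app, hbr₀app, hι_add, h.br_add_left, hp_add]
    · intro c a b
      rw [hbr₀app, hbr₀app, hι_smul, h.br_smul_left, hp_smul]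
    · intro a b
      rw [hbr₀app, hbr₀app, h.br_skew, hp_neg]
    · intro a b c
      have r1 : ∀ ξ η ζ, br₀ ξ (br₀ η ζ) = p (br (ι ξ) (br (ι η) (ι ζ))) := by
        intro ξ η ζ
        rw [hbr₀app, hbr₀app, hbrιp]
      rw [r1, r1, r1, ← hp_add, ← hp_add, h.jacobi, hp_zero]
    · intro a b
      rw [hJ₀app, hJ₀app, hJ₀app, hι_add, h.J_add, hp_add]
    · intro c a
      rw [hJ₀app, hJ₀app, hι_smul, h.J_smul, hp_smul]
    · exact hJ₀sq
    · intro ξ η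
      have t1 : br₀ ξ η = p (br (ι ξ) (ι η)) := hbr₀app ξ η
      have t2 : J₀ (br₀ (J₀ ξ) η) = p (J (br (J (ι ξ)) (ι η))) := by
        rw [hbr₀app, hJ₀app, hιJ, hpJ]
      have t3 : J₀ (br₀ ξ (J₀ η)) = p (J (br (ι ξ) (J (ι η)))) := by
        rw [hbr₀app, hJ₀app, hιJ, hpJ]
      have t4 : br₀ (J₀ ξ) (J₀ η) = p (br (J (ι ξ)) (J (ι η))) := by
        rw [hbr₀app, hιJ, hιJ]
      rw [t1, t2, t3, t4, ← hp_add, ← hp_add, ← hp_sub, h.integrable, hp_zero]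
    · intro a b c
      rw [hφ₀app, hφ₀app, hφ₀app, hι_add, h.phi_add_left]
    · intro c a b
      rw [hφ₀app, hφ₀app, hι_smul, h.phi_smul_left]
    · intro a b
      rw [hφ₀app, hφ₀app, h.phi_symm]
    · intro ξ hξ
      have hall : ∀ w, φ (ι ξ) w = 0 := by
        intro w
        conv_lhs => rw [hdec w]
        rw [phi_add_right h, phi_add_right h, phi_add_right h, phi_add_right h,
          phi_smul_right h, phi_smul_right h, phi_smul_right h, phi_smul_right h,
          hφιz, hφιz', hφιv, hφιv']
        have := hξ (p w)
        rw [hφ₀app] at this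
        rw [this]; ring
      exact hι_inj ξ (h.phi_nondeg _ hall)
    · intro ξ η ζ
      rw [hφ₀app, hφ₀app, hbr₀app, hbr₀app, hφιpbr, hφιpbr']
      exact h.phi_invariant _ _ _
    · intro ξ η
      rw [hφ₀app, hφ₀app, hιJ, hιJ, h.phi_hermitian]
  -- the double extension data conditions
  have hVid : ∀ x, br v (J x) + J (br v' (J x)) = J (br v x) - br v' x := by
    intro x
    have hE := congrArg J (h.integrable v x)
    rw [J_zero h, hJ_sub, h.J_add, h.J_add, h.J_sq, h.J_sq, hJv] at hE
    have h2 : -(br v (J x) + J (br v' (J x)) - (J (br v x) - br v' x)) = 0 := by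
      rw [← hE]; abel
    exact sub_eq_zero.1 (neg_eq_zero.1 h2)
  have hdata : IsPHQDblExtData (Fin (n-4) → ℝ) br₀ J₀ φ₀ DD FF s₀ := by
    refine ⟨?_, ?_, ?_, ?_, ?_, ?_, ?_, ?_, ?_, ?_⟩
    · intro a b
      rw [hDDapp, hDDapp, hDDapp, hι_add, br_add_right h, hp_add]
    · intro c a
      rw [hDDapp, hDDapp, hι_smul, br_smul_right h, hp_smul]
    · intro a b
      rw [hFFapp, hFFapp, hFFapp, hι_add, br_add_right h, hp_add]
    · intro c a
      rw [hFFapp, hFFapp, hι_smul, br_smul_right h, hp_smul]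
    · intro ξ η
      rw [hφ₀app, hφ₀app, hDDapp, hDDapp, hφιpbr, hφιpbr', phi_br h]
    · intro ξ η
      rw [hφ₀app, hφ₀app, hFFapp, hFFapp, hφιpbr, hφιpbr', phi_br h]
    · intro ξ η
      rw [hDDapp (br₀ ξ η), hbr₀app ξ η, hbrιp, hjac, hp_add,
        hbr₀app (DD ξ) η, hbr₀app ξ (DD η), hDDapp ξ, hDDapp η, hbrιp', hbrιp]
    · intro ξ η
      rw [hFFapp (br₀ ξ η), hbr₀app ξ η, hbrιp, hjac, hp_add,
        hbr₀app (FF ξ) η, hbr₀app ξ (FF η), hFFapp ξ, hFFapp η, hbrιp', hbrιp]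
    · intro ξ
      have t1 : FF (J₀ ξ) = p (br v (J (ι ξ))) := by rw [hFFapp, hιJ]
      have t2 : J₀ (DD (J₀ ξ)) = p (J (br v' (J (ι ξ)))) := by
        rw [hJ₀app, hDDapp, hpJ, hιJ]
      have t3 : J₀ (FF ξ) = p (J (br v (ι ξ))) := by rw [hJ₀app, hFFapp, hpJ]
      have t4 : J₀ (J₀ (DD ξ)) = - p (br v' (ι ξ)) := by rw [hJ₀sq, hDDapp]
      rw [t1, t2, t3, t4, ← hp_add, ← hp_neg, ← hp_add, ← sub_eq_add_neg]
      exact congrArg p (hVid (ι ξ))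
    · intro ξ
      rw [hFFapp (DD ξ), hDDapp ξ, hbrιp, hDDapp (FF ξ), hFFapp ξ, hbrιp, ← hp_sub,
        hjac v v' (ι ξ), add_sub_cancel_right, K4, hbr₀app]
  -- nilpotency of the quotient algebra
  set Zs : Submodule ℝ V := Submodule.span ℝ {z, z'} with hZsdef
  have hZs_ctr : ∀ w ∈ Zs, ∀ t, br w t = 0 := by
    intro w hw t
    obtain ⟨a, b, hab⟩ := Submodule.mem_span_pair.1 hw
    rw [← hab, h.br_add_left, h.br_smul_left, h.br_smul_left, hz, hz']
    simp
  have hclaim : ∀ k : ℕ, ∀ ξ ∈ lcsW br₀ (⊤ : Submodule ℝ (Fin (n-4) → ℝ)) k,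
      ι ξ ∈ lcsW br (⊤ : Submodule ℝ V) k ⊔ Zs := by
    intro k
    induction k with
    | zero => exact fun ξ _ => Submodule.mem_sup_left Submodule.mem_top
    | succ k ih =>
      intro ξ hξ
      rw [lcsW_succ] at hξ
      refine Submodule.span_induction ?_ ?_ ?_ ?_ hξ
      · rintro w ⟨η, hη, ζ, -, rfl⟩
        have hdecw : ι (br₀ η ζ) = br (ι η) (ι ζ) +
            ((-(φ (br (ι η) (ι ζ)) v)) • z + (-(φ (br (ι η) (ι ζ)) v')) • z') := by
          rw [hbr₀app, hιp_gen, hbrz, hbrz']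
          module
        rw [hdecw]
        apply Submodule.add_mem
        · obtain ⟨c₀, hc₀, w₀, hw₀, hcw⟩ := Submodule.mem_sup.1 (ih η hη)
          rw [← hcw, h.br_add_left, hZs_ctr w₀ hw₀, add_zero]
          exact Submodule.mem_sup_left (mem_lcsW_succ hc₀ (ι ζ))
        · apply Submodule.mem_sup_right
          exact Submodule.add_mem _
            (Submodule.smul_mem _ _ (Submodule.subset_span (by simp)))
            (Submodule.smul_mem _ _ (Submodule.subset_span (by simp)))
      · rw [hι_zero]; exact Submodule.zero_mem _
      · intro a b _ _ ha hb
        rw [hι_add]; exact Submodule.add_mem _ ha hb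
      · intro c a _ ha
        rw [hι_smul]; exact Submodule.smul_mem _ _ ha
  have hnil₀ : lcsW br₀ (⊤ : Submodule ℝ (Fin (n-4) → ℝ)) K = ⊥ := by
    rw [eq_bot_iff]
    intro ξ hξ
    have hmem := hclaim K ξ hξ
    rw [hK, bot_sup_eq] at hmem
    obtain ⟨a, b, hab⟩ := Submodule.mem_span_pair.1 hmem
    have ha : a = 0 := by
      have h1 := hφvι ξ
      rw [← hab, phi_add_right h, phi_smul_right h, phi_smul_right h, gr2, gr3] at h1
      linarith
    have hb : b = 0 := by
      have h1 := hφv'ι ξ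
      rw [← hab, phi_add_right h, phi_smul_right h, phi_smul_right h, gr4, gr5] at h1
      linarith
    have : ι ξ = 0 := by rw [← hab, ha, hb]; simp
    rw [Submodule.mem_bot]
    exact hι_inj ξ this
  exact ⟨br₀, J₀, φ₀, DD, FF, s₀, hIsPHQ, ⟨K, hnil₀⟩, hdata,
    ⟨ψ, condBr, condJ, condPhi⟩⟩

end construction
end PHQ9

/-- a non-abelian nilpotent pseudo-Hermitian quadratic Lie algebra of
dimension `n > 4` is equivalent to a pHQ-double extension of an `(n-4)`-dimensional
nilpotent pseudo-Hermitian quadratic Lie algebra. -/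
theorem stmt_9 {V : Type*} [AddCommGroup V] [Module ℝ V] [FiniteDimensional ℝ V]
    (br : V → V → V) (J : V → V) (φ : V → V → ℝ) (h : IsPHQ V br J φ)
    (hnilp : ∃ k, lcsW br ⊤ k = ⊥)
    (hna : ∃ x y : V, br x y ≠ 0)
    (n : ℕ) (hn : Module.finrank ℝ V = n) (h4 : 4 < n) :
    ∃ (br₀ : (Fin (n - 4) → ℝ) → (Fin (n - 4) → ℝ) → (Fin (n - 4) → ℝ))
      (J₀ : (Fin (n - 4) → ℝ) → (Fin (n - 4) → ℝ))
      (φ₀ : (Fin (n - 4) → ℝ) → (Fin (n - 4) → ℝ) → ℝ)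
      (D F : (Fin (n - 4) → ℝ) → (Fin (n - 4) → ℝ)) (s₀ : Fin (n - 4) → ℝ),
      IsPHQ (Fin (n - 4) → ℝ) br₀ J₀ φ₀ ∧
      (∃ k, lcsW br₀ ⊤ k = ⊥) ∧
      IsPHQDblExtData (Fin (n - 4) → ℝ) br₀ J₀ φ₀ D F s₀ ∧
      PHQEquiv br J φ (extBr br₀ φ₀ D F s₀) (extJ J₀) (extPhi φ₀) := by
  obtain ⟨z₀, hz0, hzc, hjzc, hziso⟩ := PHQ9.main_lemma h hnilp hna
  obtain ⟨v, hv1, hv2, hv3⟩ := PHQ9.exists_v h hz0 hziso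
  obtain ⟨K, hK⟩ := hnilp
  exact PHQ9.construction h hK hn h4 hzc hjzc hziso hv1 hv2 hv3
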